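/- There is no infinite arithmetic progression of natural numbers with positive common difference all of whose terms are base-10 palindromes. That is, for all a and d ≥ 1, there exists n such that a + n·d is not a palindrome. -/

import Mathlib

def IsPalindrome10 (n : ℕ) : Prop := Nat.digits 10 n = (Nat.digits 10 n).reverse

lemma digits_ten_pow (n : ℕ) : Nat.digits 10 (10 ^ n) = List.replicate n 0 ++ [1] := by
  induction n with
  | zero => simp
  | succ n ih =>
    rw [Nat.digits_def' (by norm_num : (1:ℕ) < 10) (by positivity)]
    have h1 : 10 ^ (n + 1) % 10 = 0 := by
      simp [pow_succ, Nat.mul_mod_left]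
    have h2 : 10 ^ (n + 1) / 10 = 10 ^ n := by
      rw [pow_succ]
      omega
    rw [h1, h2, ih, List.replicate_succ]
    simp

lemma ofDigits_replicate_zero (n : ℕ) : Nat.ofDigits 10 (List.replicate n (0:ℕ)) = 0 := by
  induction n with
  | zero => simp
  | succ n ih => simp [List.replicate_succ, Nat.ofDigits_cons, ih]

lemma pal_mod (x k m : ℕ) (hk : 1 ≤ k) (hkm : k ≤ m) (h1 : 10 ^ m ≤ x)
    (h2 : x < 10 ^ m + 10 ^ (m - k)) (hp : IsPalindrome10 x) : x % 10 ^ k = 1 := by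
  have hx0 : x ≠ 0 := by
    have : 0 < 10 ^ m := Nat.pow_pos (by norm_num)
    omega
  set l := Nat.digits 10 x with hl
  -- length of l is m + 1
  have hxlt : x < 10 ^ (m + 1) := by
    have : 10 ^ (m - k) ≤ 10 ^ m := Nat.pow_le_pow_right (by norm_num) (Nat.sub_le m k)
    calc x < 10 ^ m + 10 ^ (m - k) := h2
      _ ≤ 10 ^ m + 10 ^ m := by omega
      _ ≤ 10 ^ (m + 1) := by rw [pow_succ]; omega
  have hlog : Nat.log 10 x = m := Nat.log_eq_of_pow_le_of_lt_pow h1 hxlt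
  have hlen : l.length = m + 1 := by
    rw [hl, Nat.digits_len 10 x (by norm_num) hx0, hlog]
  have hltb : ∀ u ∈ l, u < 10 := fun u hu => Nat.digits_lt_base (by norm_num) hu
  set j := m + 1 - k with hj
  -- x / 10 ^ j = 10 ^ (k - 1)
  have hdiv : x / 10 ^ j = 10 ^ (k - 1) := by
    have e1 : 10 ^ (k - 1) * 10 ^ j = 10 ^ m := by
      rw [← pow_add]; congr 1; omega
    apply Nat.div_eq_of_lt_le
    · rw [e1]; exact h1
    · have : (10 ^ (k - 1) + 1) * 10 ^ j = 10 ^ m + 10 ^ j := by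
        rw [add_mul, one_mul, e1]
      rw [this]
      have : 10 ^ (m - k) ≤ 10 ^ j := Nat.pow_le_pow_right (by norm_num) (by omega)
      omega
  have hdrop : Nat.ofDigits 10 (l.drop j) = 10 ^ (k - 1) := by
    rw [← Nat.self_div_pow_eq_ofDigits_drop j x (by norm_num), hdiv]
  -- the dropped list equals the digits of 10 ^ (k-1)
  have hdnil : l.drop j ≠ [] := by
    have : (l.drop j).length = k := by rw [List.length_drop, hlen]; omega
    intro h; rw [h] at this; simp at this; omega
  have hlnil : l ≠ [] := Nat.digits_ne_nil_iff_ne_zero.mpr hx0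
  have hlast : (l.drop j).getLast hdnil ≠ 0 := by
    rw [List.getLast_drop]
    exact Nat.getLast_digit_ne_zero 10 hx0
  have hD : l.drop j = List.replicate (k - 1) 0 ++ [1] := by
    have := Nat.digits_ofDigits 10 (by norm_num) (l.drop j)
      (fun u hu => hltb u (List.mem_of_mem_drop hu)) (fun h => hlast)
    rw [hdrop, digits_ten_pow] at this
    exact this.symm
  -- take k of l via palindrome
  have htake : l.take k = 1 :: List.replicate (k - 1) 0 := by
    have hrev : l.take k = l.reverse.take k := by rw [← hp]
    rw [hrev, List.take_reverse, hlen]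
    have : m + 1 - k = j := rfl
    rw [this, hD]
    simp
  -- x % 10 ^ k = ofDigits of take k
  have hsplit : x = Nat.ofDigits 10 (l.take k) + 10 ^ k * Nat.ofDigits 10 (l.drop k) := by
    conv_lhs => rw [← Nat.ofDigits_digits 10 x, ← hl, ← List.take_append_drop k l]
    rw [Nat.ofDigits_append, List.length_take, min_eq_left (by omega)]
  have hlt : Nat.ofDigits 10 (l.take k) < 10 ^ k := by
    have := Nat.ofDigits_lt_base_pow_length (b := 10) (l := l.take k) (by norm_num)
      (fun u hu => hltb u (List.mem_of_mem_take hu))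
    rwa [List.length_take, min_eq_left (by omega)] at this
  have hval : Nat.ofDigits 10 (l.take k) = 1 := by
    simp [htake, Nat.ofDigits_cons, ofDigits_replicate_zero]
  have h1lt : 1 < 10 ^ k := Nat.one_lt_pow (by omega) (by norm_num)
  calc x % 10 ^ k = (1 + 10 ^ k * Nat.ofDigits 10 (l.drop k)) % 10 ^ k := by
        rw [← hval, ← hsplit]
    _ = 1 % 10 ^ k := Nat.add_mul_mod_self_left 1 _ _
    _ = 1 := Nat.mod_eq_of_lt h1lt

theorem stmt_6 (a d : ℕ) (hd : 1 ≤ d) :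
    ∃ n : ℕ, ¬ IsPalindrome10 (a + n * d) := by
  by_contra h
  push_neg at h
  set k := d with hkdef
  set m := a + 3 * d with hmdef
  have hk1 : 1 ≤ k := hd
  have hkm : k ≤ m := by omega
  have hdk : d < 10 ^ k := Nat.lt_pow_self (by norm_num : 1 < 10)
  have ha : a < 10 ^ m := by
    calc a ≤ m := by omega
      _ < 10 ^ m := Nat.lt_pow_self (by norm_num : 1 < 10)
  have h2d : 2 * d < 10 ^ (m - k) := by
    calc 2 * d ≤ m - k := by omega
      _ < 10 ^ (m - k) := Nat.lt_pow_self (by norm_num : 1 < 10)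
  -- find least n with a + n * d ≥ 10 ^ m
  have hex : ∃ n : ℕ, 10 ^ m ≤ a + n * d := ⟨10 ^ m, by nlinarith⟩
  set n := Nat.find hex with hndef
  have hn : 10 ^ m ≤ a + n * d := Nat.find_spec hex
  have hnpos : n ≠ 0 := by
    intro h0
    rw [h0] at hn; simp at hn; omega
  have hprev : a + (n - 1) * d < 10 ^ m := by
    have := Nat.find_min hex (m := n - 1) (by omega)
    omega
  have hx2 : a + n * d < 10 ^ m + d := by
    have hmul : (n - 1) * d = n * d - d := Nat.sub_one_mul n d
    have hge : d ≤ n * d := Nat.le_mul_of_pos_left d (Nat.pos_of_ne_zero hnpos)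
    omega
  set x := a + n * d with hxdef
  have hp1 : x % 10 ^ k = 1 :=
    pal_mod x k m hk1 hkm hn (by omega) (h n)
  have hp2 : (x + d) % 10 ^ k = 1 := by
    have hx' : x + d = a + (n + 1) * d := by rw [hxdef]; ring
    refine pal_mod (x + d) k m hk1 hkm (by omega) (by omega) ?_
    rw [hx']; exact h (n + 1)
  have : (x + d) % 10 ^ k = (x % 10 ^ k + d % 10 ^ k) % 10 ^ k := by
    rw [Nat.add_mod]
  have hdm : d % 10 ^ k = d := Nat.mod_eq_of_lt hdk
  rw [hp1, hdm] at this
  rw [this] at hp2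
  have h10k : 1 ≤ 10 ^ k := Nat.one_le_pow _ _ (by norm_num)
  rcases Nat.lt_or_ge (1 + d) (10 ^ k) with hc | hc
  · rw [Nat.mod_eq_of_lt hc] at hp2; omega
  · have : 1 + d < 2 * 10 ^ k := by omega
    have hmod : (1 + d) % 10 ^ k = 1 + d - 10 ^ k := by
      rw [Nat.mod_eq_sub_mod hc, Nat.mod_eq_of_lt (by omega)]
    rw [hmod] at hp2
    omega
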